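/- Let C ⊆ F_2^n be a neural code, let c ∈ M^{2n} be a motif, and let a ∈ M^{2n} be the motif obtained from c by replacing every component equal to 1 by *. Let S = {i ∈ [n] : a_i = a_{n+i} = 0}. Then p_c ⊇ J_{C^[p]} if and only if for every word w ∈ F_2^n satisfying, for all i ∈ [n] \ S, (a_i = 0 ⇒ w_i = 0) and (a_{n+i} = 0 ⇒ w_i = 1), there exists a word u ∈ C with u_j = w_j for all j ∈ [n] \ S. (In the language of the paper: p_c ⊇ J_{C^[p]} iff the depolarized partial motif obtained from a by deactivating the neurons in S is a partial motif of the partial code obtained from C by deactivating the neurons in S.) -/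

import Mathlib

open MvPolynomial

/-- The field with two elements. -/
abbrev F2 := ZMod 2

/-- A motif indexed by `ι`: at each index it is `0`, `1`, or `*` (represented by `none`). -/
abbrev Motif (ι : Type*) := ι → Option F2

/-- The partial order on motifs: `a ≤ b` iff `a i = b i` for every index `i` with `b i ≠ *`. -/
def MotifLE {ι : Type*} (a b : Motif ι) : Prop :=
  ∀ (i : ι) (x : F2), b i = some x → a i = some x

/-- The variety of a motif: all words agreeing with the motif on its non-`*` coordinates. -/
def variety {ι : Type*} (a : Motif ι) : Set (ι → F2) :=
  {w | ∀ (i : ι) (x : F2), a i = some x → w i = x}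

/-- `a` is a motif of the code `C` iff its variety is contained in `C`. -/
def IsMotifOf {ι : Type*} (C : Set (ι → F2)) (a : Motif ι) : Prop :=
  variety a ⊆ C

/-- The set of maximal motifs of a code `C`. -/
def maxMot {ι : Type*} (C : Set (ι → F2)) : Set (Motif ι) :=
  {a | IsMotifOf C a ∧ ∀ b : Motif ι, IsMotifOf C b → MotifLE a b → a = b}

/-- Two motifs are disjoint if at some index both are non-`*` and they differ. -/
def DisjointMotifs {ι : Type*} (a b : Motif ι) : Prop :=
  ∃ (i : ι) (x : F2), a i = some x ∧ b i = some (1 - x)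

/-- Polarization of a motif of length `n`, as a motif of length `2n`
(indexed by `Fin n ⊕ Fin n`; `Sum.inl i` is coordinate `i`, `Sum.inr i` is coordinate `n+i`). -/
def polMotif {n : ℕ} (a : Motif (Fin n)) : Motif (Fin n ⊕ Fin n)
  | Sum.inl i => if a i = some 0 then some 0 else none
  | Sum.inr i => if a i = some 1 then some 0 else none

/-- The bar of a motif: `0 ↦ 1`, `1 ↦ 0`, `* ↦ *`. -/
def barMotif {ι : Type*} (a : Motif ι) : Motif ι :=
  fun i => (a i).map (fun x => 1 - x)

/-- The polarization of a code `C ⊆ F₂ⁿ`: the union of the varieties of the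
polarizations of the maximal motifs of `C`. -/
def polCode {n : ℕ} (C : Set (Fin n → F2)) : Set ((Fin n ⊕ Fin n) → F2) :=
  ⋃ a ∈ maxMot C, variety (polMotif a)

/-- The code `over-over-D-p` : the union of the varieties of `bar (pol (bar b))`
over the maximal motifs `b` of `D`. -/
def barPolBarCode {n : ℕ} (D : Set (Fin n → F2)) : Set ((Fin n ⊕ Fin n) → F2) :=
  ⋃ b ∈ maxMot D, variety (barMotif (polMotif (barMotif b)))

/-- The formal polarization of a code `C`: the complement of `barPolBarCode` of `Cᶜ`. -/
def formalPol {n : ℕ} (C : Set (Fin n → F2)) : Set ((Fin n ⊕ Fin n) → F2) :=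
  (barPolBarCode Cᶜ)ᶜ

/-- The Lagrange polynomial of a motif. -/
noncomputable def lagrange {ι : Type*} [Fintype ι] (a : Motif ι) : MvPolynomial ι F2 :=
  (∏ i ∈ Finset.univ.filter (fun i => a i = some 1), X i) *
    ∏ j ∈ Finset.univ.filter (fun j => a j = some 0), (1 - X j)

/-- The motif (with no stars) corresponding to a word. -/
def wordMotif {ι : Type*} (w : ι → F2) : Motif ι := fun i => some (w i)

/-- The neural ideal of a code: generated by the Lagrange polynomials of the
words in the complement of the code. -/
noncomputable def neuralIdeal {ι : Type*} [Fintype ι] (C : Set (ι → F2)) :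
    Ideal (MvPolynomial ι F2) :=
  Ideal.span ((fun w => lagrange (wordMotif w)) '' Cᶜ)

/-- The pseudo-monomial `∏_{i ∈ σ} X i * ∏_{j ∈ τ} (1 - X j)`. -/
noncomputable def pm {ι : Type*} (σ τ : Finset ι) : MvPolynomial ι F2 :=
  (∏ i ∈ σ, X i) * ∏ j ∈ τ, (1 - X j)

/-- A polynomial is a pseudo-monomial if it equals `pm σ τ` for disjoint `σ τ`. -/
def IsPseudoMonomial {ι : Type*} (f : MvPolynomial ι F2) : Prop :=
  ∃ σ τ : Finset ι, Disjoint σ τ ∧ f = pm σ τ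

/-- The canonical form of an ideal: the set of its minimal pseudo-monomials, i.e.
pseudo-monomials `f ∈ I` such that no pseudo-monomial `g ∈ I` of strictly smaller
degree divides `f`. -/
def CF {ι : Type*} (I : Ideal (MvPolynomial ι F2)) : Set (MvPolynomial ι F2) :=
  {f | IsPseudoMonomial f ∧ f ∈ I ∧
    ¬ ∃ g : MvPolynomial ι F2, IsPseudoMonomial g ∧ g ∈ I ∧
      g.totalDegree < f.totalDegree ∧ g ∣ f}

/-- The polarization of the pseudo-monomial with data `(σ, τ)`:
`∏_{i ∈ σ} X i * ∏_{j ∈ τ} Y j` (here `Y j = X (Sum.inr j)`). -/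
noncomputable def ppm {n : ℕ} (σ τ : Finset (Fin n)) : MvPolynomial (Fin n ⊕ Fin n) F2 :=
  (∏ i ∈ σ, X (Sum.inl i)) * ∏ j ∈ τ, X (Sum.inr j)

/-- `g` is the polarization of the pseudo-monomial `f`. -/
def PolPM {n : ℕ} (f : MvPolynomial (Fin n) F2) (g : MvPolynomial (Fin n ⊕ Fin n) F2) : Prop :=
  ∃ σ τ : Finset (Fin n), Disjoint σ τ ∧ f = pm σ τ ∧ g = ppm σ τ

/-- The set of polarizations of the elements of a set of pseudo-monomials. -/
def polSet {n : ℕ} (S : Set (MvPolynomial (Fin n) F2)) :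
    Set (MvPolynomial (Fin n ⊕ Fin n) F2) :=
  {g | ∃ f ∈ S, PolPM f g}

/-- The prime ideal of a motif: generated by `X i` for `a i = 0`
and `1 - X j` for `a j = 1`. -/
noncomputable def pIdeal {ι : Type*} (a : Motif ι) : Ideal (MvPolynomial ι F2) :=
  Ideal.span ({f | ∃ i, a i = some 0 ∧ f = X i} ∪ {f | ∃ j, a j = some 1 ∧ f = 1 - X j})
private lemma F2cases (x : F2) : x = 0 ∨ x = 1 := by revert x; decide

lemma eval_lagrange_self {ι : Type*} [Fintype ι] (w : ι → F2) :
    eval w (lagrange (wordMotif w)) = 1 := by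
  unfold lagrange wordMotif
  rw [map_mul, map_prod, map_prod, Finset.prod_eq_one, Finset.prod_eq_one, one_mul]
  · intro j hj
    simp only [Finset.mem_filter, Option.some.injEq] at hj
    simp [hj.2]
  · intro i hi
    simp only [Finset.mem_filter, Option.some.injEq] at hi
    simp [hi.2]

lemma pIdeal_le_ker {ι : Type*} [Fintype ι] (c : Motif ι) (w : ι → F2)
    (hw : w ∈ variety c) : pIdeal c ≤ RingHom.ker (eval w) := by
  rw [pIdeal, Ideal.span_le]
  rintro f (⟨i, hi, rfl⟩ | ⟨j, hj, rfl⟩)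
  · simp [RingHom.mem_ker, hw i 0 hi]
  · simp [RingHom.mem_ker, hw j 1 hj]

lemma lagrange_mem_pIdeal_iff {ι : Type*} [Fintype ι] [DecidableEq ι]
    (c : Motif ι) (w : ι → F2) :
    lagrange (wordMotif w) ∈ pIdeal c ↔ w ∉ variety c := by
  constructor
  · intro h hw
    have h2 := pIdeal_le_ker c w hw h
    rw [RingHom.mem_ker, eval_lagrange_self] at h2
    exact one_ne_zero h2
  · intro hw
    have hex : ∃ i x, c i = some x ∧ w i ≠ x := by
      by_contra hcon
      push_neg at hcon
      exact hw (fun i x hx => hcon i x hx)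
    obtain ⟨i, x, hci, hwi⟩ := hex
    rcases F2cases x with rfl | rfl
    · have hwi1 : w i = 1 := by
        rcases F2cases (w i) with h | h
        · exact absurd h hwi
        · exact h
      have hX : X i ∈ pIdeal c := Ideal.subset_span (Or.inl ⟨i, hci, rfl⟩)
      refine Ideal.mem_of_dvd _ ?_ hX
      exact dvd_mul_of_dvd_left
        (Finset.dvd_prod_of_mem _ (by simp [wordMotif, hwi1])) _
    · have hwi0 : w i = 0 := by
        rcases F2cases (w i) with h | h
        · exact h
        · exact absurd h hwi
      have hX : (1 - X i : MvPolynomial ι F2) ∈ pIdeal c :=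
        Ideal.subset_span (Or.inr ⟨i, hci, rfl⟩)
      refine Ideal.mem_of_dvd _ ?_ hX
      exact dvd_mul_of_dvd_right
        (Finset.dvd_prod_of_mem _ (by simp [wordMotif, hwi0])) _

lemma neuralIdeal_le_pIdeal_iff {ι : Type*} [Fintype ι] [DecidableEq ι]
    (E : Set (ι → F2)) (c : Motif ι) :
    neuralIdeal E ≤ pIdeal c ↔ variety c ⊆ E := by
  rw [neuralIdeal, Ideal.span_le]
  constructor
  · intro h w hw
    by_contra hwE
    have h2 : lagrange (wordMotif w) ∈ pIdeal c := h ⟨w, hwE, rfl⟩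
    rw [lagrange_mem_pIdeal_iff] at h2
    exact h2 hw
  · rintro h f ⟨w, hw, rfl⟩
    rw [SetLike.mem_coe, lagrange_mem_pIdeal_iff]
    exact fun hwc => hw (h hwc)

lemma mB_inl {n : ℕ} (b : Motif (Fin n)) (i : Fin n) :
    barMotif (polMotif (barMotif b)) (Sum.inl i) = if b i = some 1 then some 1 else none := by
  rcases hb : b i with _ | y
  · simp [barMotif, polMotif, hb]
  · rcases F2cases y with rfl | rfl <;> simp [barMotif, polMotif, hb]

lemma mB_inr {n : ℕ} (b : Motif (Fin n)) (i : Fin n) :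
    barMotif (polMotif (barMotif b)) (Sum.inr i) = if b i = some 0 then some 1 else none := by
  rcases hb : b i with _ | y
  · simp [barMotif, polMotif, hb]
  · rcases F2cases y with rfl | rfl <;> simp [barMotif, polMotif, hb]

lemma mem_variety_mB {n : ℕ} (b : Motif (Fin n)) (v : (Fin n ⊕ Fin n) → F2) :
    v ∈ variety (barMotif (polMotif (barMotif b))) ↔
      ∀ i, (b i = some 1 → v (Sum.inl i) = 1) ∧ (b i = some 0 → v (Sum.inr i) = 1) := by
  constructor
  · intro hv i
    exact ⟨fun h => hv (Sum.inl i) 1 (by rw [mB_inl, if_pos h]),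
           fun h => hv (Sum.inr i) 1 (by rw [mB_inr, if_pos h])⟩
  · intro hv α x hα
    cases α with
    | inl i =>
      rw [mB_inl] at hα
      split at hα
      · cases hα; exact (hv i).1 ‹_›
      · cases hα
    | inr i =>
      rw [mB_inr] at hα
      split at hα
      · cases hα; exact (hv i).2 ‹_›
      · cases hα
/-- `p_c ⊇ J_{C^[p]}` iff the depolarized partial motif obtained from
`a` (the motif `c` with its `1`s replaced by `*`s) by deactivating the neurons in
`S = {i : a_i = a_{n+i} = 0}` is a partial motif of the partial code obtained from
`C` by deactivating the neurons in `S`. -/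
theorem mem_minPrimes_formalPol_iff_partial_motif {n : ℕ} (C : Set (Fin n → F2))
    (c a : Motif (Fin n ⊕ Fin n))
    (ha : ∀ α : Fin n ⊕ Fin n, a α = if c α = some 1 then none else c α)
    (S : Set (Fin n))
    (hS : S = {i : Fin n | a (Sum.inl i) = some 0 ∧ a (Sum.inr i) = some 0}) :
    neuralIdeal (formalPol C) ≤ pIdeal c ↔
      ∀ w : Fin n → F2,
        (∀ i : Fin n, i ∉ S →
          (a (Sum.inl i) = some 0 → w i = 0) ∧ (a (Sum.inr i) = some 0 → w i = 1)) →
        ∃ u ∈ C, ∀ j : Fin n, j ∉ S → u j = w j := by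
  classical
  have ha0 : ∀ α, a α = some 0 ↔ c α = some 0 := by
    intro α
    rw [ha]
    split
    · next h => simp [h]
    · rfl
  rw [neuralIdeal_le_pIdeal_iff]
  unfold formalPol
  constructor
  · -- forward direction
    intro hsub w hw
    by_contra hno
    push_neg at hno
    set e : Motif (Fin n) := fun i => if i ∈ S then none else some (w i) with he
    have hemot : IsMotifOf Cᶜ e := by
      intro u hu huC
      obtain ⟨j, hjS, hj⟩ := hno u huC
      exact hj (hu j (w j) (by simp [he, hjS]))
    obtain ⟨b, ⟨hbmot, hble⟩, hbmax⟩ :=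
      Set.Finite.exists_maximalFor
        (fun b : Motif (Fin n) => (Finset.univ.filter (fun i => b i = none)).card)
        {b | IsMotifOf Cᶜ b ∧ MotifLE e b} (Set.toFinite _)
        ⟨e, hemot, fun i x h => h⟩
    have hbS : ∀ i x, b i = some x → i ∉ S ∧ w i = x := by
      intro i x hbi
      have hei := hble i x hbi
      by_cases hiS : i ∈ S
      · simp [he, hiS] at hei
      · simp only [he, if_neg hiS, Option.some.injEq] at hei
        exact ⟨hiS, hei⟩
    have hbmaxmot : b ∈ maxMot Cᶜ := by
      refine ⟨hbmot, fun b' hb' hle => ?_⟩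
      have hble' : MotifLE e b' := fun i x h => hble i x (hle i x h)
      have hsubconj : Finset.univ.filter (fun i => b i = none) ⊆
          Finset.univ.filter (fun i => b' i = none) := by
        intro i hi
        simp only [Finset.mem_filter, Finset.mem_univ, true_and] at hi ⊢
        rcases hb'i : b' i with _ | y
        · rfl
        · rw [hle i y hb'i] at hi; cases hi
      have hcard := hbmax (j := b') ⟨hb', hble'⟩ (Finset.card_le_card hsubconj)
      have heq := Finset.eq_of_subset_of_card_le hsubconj hcard
      funext i
      rcases hb'i : b' i with _ | y
      · have hmem : i ∈ Finset.univ.filter (fun i => b' i = none) := by simp [hb'i]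
        rw [← heq] at hmem
        simpa using hmem
      · exact hle i y hb'i
    set v : (Fin n ⊕ Fin n) → F2 := fun α =>
      match α with
      | Sum.inl i => if b i = some 1 then 1 else (c (Sum.inl i)).getD 0
      | Sum.inr i => if b i = some 0 then 1 else (c (Sum.inr i)).getD 0
      with hv
    have hvc : v ∈ variety c := by
      intro α x hcx
      cases α with
      | inl i =>
        show (if b i = some 1 then 1 else (c (Sum.inl i)).getD 0) = x
        split
        · next hbi =>
          obtain ⟨hiS, hwi⟩ := hbS i 1 hbi
          rcases F2cases x with rfl | rfl
          · have h0 := (hw i hiS).1 ((ha0 _).mpr hcx)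
            rw [hwi] at h0
            exact absurd h0 one_ne_zero
          · rfl
        · simp [hcx]
      | inr i =>
        show (if b i = some 0 then 1 else (c (Sum.inr i)).getD 0) = x
        split
        · next hbi =>
          obtain ⟨hiS, hwi⟩ := hbS i 0 hbi
          rcases F2cases x with rfl | rfl
          · have h0 := (hw i hiS).2 ((ha0 _).mpr hcx)
            rw [hwi] at h0
            exact absurd h0.symm one_ne_zero
          · rfl
        · simp [hcx]
    have hvm : v ∈ variety (barMotif (polMotif (barMotif b))) := by
      rw [mem_variety_mB]
      intro i
      constructor
      · intro h
        show (if b i = some 1 then 1 else (c (Sum.inl i)).getD 0) = 1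
        rw [if_pos h]
      · intro h
        show (if b i = some 0 then 1 else (c (Sum.inr i)).getD 0) = 1
        rw [if_pos h]
    exact (hsub hvc) (Set.mem_biUnion hbmaxmot hvm)
  · -- backward direction
    intro hrhs v hvc hvB
    simp only [barPolBarCode, Set.mem_iUnion] at hvB
    obtain ⟨b, hbmax, hvb⟩ := hvB
    have hvb' := (mem_variety_mB b v).mp hvb
    have hcv : ∀ α, c α = some 0 → v α = 0 := fun α h => hvc α 0 h
    set w : Fin n → F2 :=
      fun i => (b i).getD (if a (Sum.inl i) = some 0 then 0 else 1) with hwdef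
    have hbnotS : ∀ i x, b i = some x → i ∉ S := by
      intro i x hbi hiS
      rw [hS] at hiS
      obtain ⟨h1, h2⟩ := hiS
      rcases F2cases x with rfl | rfl
      · have hv1 := (hvb' i).2 hbi
        have hv0 := hcv _ ((ha0 _).mp h2)
        rw [hv1] at hv0
        exact one_ne_zero hv0
      · have hv1 := (hvb' i).1 hbi
        have hv0 := hcv _ ((ha0 _).mp h1)
        rw [hv1] at hv0
        exact one_ne_zero hv0
    have hwcon : ∀ i, i ∉ S →
        (a (Sum.inl i) = some 0 → w i = 0) ∧ (a (Sum.inr i) = some 0 → w i = 1) := by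
      intro i hiS
      constructor
      · intro hai
        show (b i).getD (if a (Sum.inl i) = some 0 then 0 else 1) = 0
        rcases hbi : b i with _ | x
        · simp [hai]
        · rcases F2cases x with rfl | rfl
          · rfl
          · exfalso
            have hv1 := (hvb' i).1 hbi
            have hv0 := hcv _ ((ha0 _).mp hai)
            rw [hv1] at hv0
            exact one_ne_zero hv0
      · intro hai
        show (b i).getD (if a (Sum.inl i) = some 0 then 0 else 1) = 1
        rcases hbi : b i with _ | x
        · have hnl : a (Sum.inl i) ≠ some 0 := by
            intro h
            exact hiS (hS ▸ (⟨h, hai⟩ : a (Sum.inl i) = some 0 ∧ a (Sum.inr i) = some 0))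
          rw [Option.getD_none, if_neg hnl]
        · rcases F2cases x with rfl | rfl
          · exfalso
            have hv1 := (hvb' i).2 hbi
            have hv0 := hcv _ ((ha0 _).mp hai)
            rw [hv1] at hv0
            exact one_ne_zero hv0
          · rfl
    obtain ⟨u, huC, hu⟩ := hrhs w hwcon
    have humem : u ∈ variety b := by
      intro i x hbi
      rw [hu i (hbnotS i x hbi)]
      show (b i).getD (if a (Sum.inl i) = some 0 then 0 else 1) = x
      rw [hbi]
      rfl
    exact (hbmax.1 humem) huC
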